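/- Suppose I ⊆ [0, N−1] satisfies the Partial Order Property, let w_min = min_{x∈I} w(g_x), and let i ∈ I with w(g_i) = w_min. Then for every subset J ⊆ K_i there exists a set M ⊆ (I ∩ [i+1, N−1]) \ K_i such that w(g_i ⊕ ⊕_{j∈J} g_j ⊕ ⊕_{m∈M} g_m) = w_min. -/

import Mathlib

noncomputable section
open scoped Classical
open Finset

/-- The 2×2 binary matrix [[1,0],[1,1]], as an ℕ-indexed function (zero outside range). -/
def G2 (a b : ℕ) : ZMod 2 :=
  if a = 0 ∧ b = 0 then 1
  else if a = 1 ∧ b = 0 then 1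
  else if a = 1 ∧ b = 1 then 1
  else 0

/-- `G n i c` is the (i,c) entry of the n-th Kronecker power over F₂ of [[1,0],[1,1]],
for row/column indices i, c ∈ [0, 2^n − 1] (standard row-major index flattening). -/
def G : ℕ → ℕ → ℕ → ZMod 2
  | 0 => fun i c => if i = 0 ∧ c = 0 then 1 else 0
  | n + 1 => fun i c => G2 (i / 2 ^ n) (c / 2 ^ n) * G n (i % 2 ^ n) (c % 2 ^ n)

/-- Row i of the polar transform G_N (N = 2^n), as a vector of its coordinates. -/
def g (n i : ℕ) : ℕ → ZMod 2 := fun c => G n i c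

/-- S_i ⊆ [0, n−1]: the support of the binary representation of i. -/
def S (n i : ℕ) : Finset ℕ := (Finset.range n).filter fun a => i.testBit a

/-- T_i = [0, n−1] \ S_i. -/
def T (n i : ℕ) : Finset ℕ := Finset.range n \ S n i

/-- Hamming weight of a vector whose coordinates are indexed by [0, 2^n − 1]. -/
def wt (n : ℕ) (v : ℕ → ZMod 2) : ℕ :=
  ((Finset.range (2 ^ n)).filter fun c => v c ≠ 0).card

/-- The index in [0, 2^n − 1] whose binary support is the set U ⊆ [0, n−1]. -/
def idx (U : Finset ℕ) : ℕ := ∑ a ∈ U, 2 ^ a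

/-- K_i = {j ∈ [i+1, N−1] : w(g_j) ≥ w(g_i ⊕ g_j) and w(g_i ⊕ g_j) = w(g_i)}. -/
def K (n i : ℕ) : Finset ℕ :=
  (Finset.Ico (i + 1) (2 ^ n)).filter fun j =>
    wt n (g n i + g n j) ≤ wt n (g n j) ∧ wt n (g n i + g n j) = wt n (g n i)

/-- One generating step of the partial order on [0, 2^n − 1]. -/
def poStep (n i j : ℕ) : Prop :=
  i < 2 ^ n ∧ j < 2 ^ n ∧
    (S n i ⊆ S n j ∨
      ∃ a b, a ∈ S n i ∧ b ∉ S n i ∧ a < b ∧ S n j = insert b (S n i \ {a}))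

/-- The partial order ⪯: reflexive–transitive closure of the generating relation. -/
def po (n : ℕ) : ℕ → ℕ → Prop := Relation.ReflTransGen (poStep n)

/-- Partial Order Property of an information set I ⊆ [0, 2^n − 1]. -/
def POP (n : ℕ) (I : Finset ℕ) : Prop :=
  ∀ i ∈ I, ∀ j, j < 2 ^ n → po n i j → j ∈ I

/-- The code C(I): all F₂-linear combinations (i.e. subset sums) of the rows g_i, i ∈ I. -/
def codewords (n : ℕ) (I : Finset ℕ) : Finset (ℕ → ZMod 2) :=
  I.powerset.image fun H => ∑ h ∈ H, g n h

/-- A_w(I): the number of codewords of C(I) of Hamming weight w. -/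
def A (n : ℕ) (I : Finset ℕ) (w : ℕ) : ℕ :=
  ((codewords n I).filter fun v => wt n v = w).card

/-- The coset C_i(I) = {g_i ⊕ ⊕_{h∈H} g_h : H ⊆ I \ [0,i]}. -/
def coset (n : ℕ) (I : Finset ℕ) (i : ℕ) : Finset (ℕ → ZMod 2) :=
  ((I.filter fun h => i < h).powerset).image fun H => g n i + ∑ h ∈ H, g n h

/-- A_{i,w}(I): the number of vectors of Hamming weight w in the coset C_i(I). -/
def Ai (n : ℕ) (I : Finset ℕ) (i w : ℕ) : ℕ :=
  ((coset n I i).filter fun v => wt n v = w).card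

section Aux
variable {n : ℕ}

lemma zmod2_eq_of_iff {u v : ZMod 2} (h : u = 0 ↔ v = 0) : u = v := by
  revert h; revert u v; decide

lemma idx_lt {U : Finset ℕ} {k : ℕ} (h : U ⊆ Finset.range k) : idx U < 2 ^ k := by
  have hle : idx U ≤ ∑ a ∈ Finset.range k, 2 ^ a :=
    Finset.sum_le_sum_of_subset h
  have h2 : ∀ m : ℕ, ∑ a ∈ Finset.range m, 2 ^ a = 2 ^ m - 1 := by
    intro m
    induction m with
    | zero => simp
    | succ m ih =>
      rw [Finset.sum_range_succ, ih, pow_succ]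
      have : 1 ≤ 2 ^ m := Nat.one_le_two_pow
      omega
  have h2 := h2 k
  have h3 : 0 < 2 ^ k := Nat.two_pow_pos _
  omega

lemma testBit_idx (U : Finset ℕ) (b : ℕ) : (idx U).testBit b = (b ∈ U) := by
  induction U using Finset.induction_on_max with
  | empty => simp [idx, Nat.zero_testBit]
  | insert a s ha ih =>
    have hanotin : a ∉ s := fun h => lt_irrefl a (ha a h)
    have hsub : s ⊆ Finset.range a := fun x hx => Finset.mem_range.2 (ha x hx)
    have hlt : idx s < 2 ^ a := idx_lt hsub
    have hidx : idx (insert a s) = 2 ^ a + idx s := by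
      rw [idx, Finset.sum_insert hanotin]; rfl
    rw [hidx]
    rcases lt_trichotomy b a with hb | hb | hb
    · rw [Nat.testBit_two_pow_add_gt hb, ih]
      simp [Finset.mem_insert]
      omega
    · subst hb
      rw [Nat.testBit_two_pow_add_eq, Nat.testBit_lt_two_pow hlt]
      simp
    · have h1 : 2 ^ a + idx s < 2 ^ b := by
        have : 2 ^ (a+1) ≤ 2 ^ b := Nat.pow_le_pow_right (by norm_num) hb
        have : 2 ^ a + idx s < 2 ^ (a+1) := by rw [pow_succ]; omega
        omega
      rw [Nat.testBit_lt_two_pow h1]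
      simp [Finset.mem_insert]
      constructor
      · omega
      · intro h; exact absurd (Finset.mem_range.2 hb) (fun _ => (ha b h).not_gt hb)

lemma S_idx {U : Finset ℕ} (h : U ⊆ Finset.range n) : S n (idx U) = U := by
  ext b
  simp only [S, Finset.mem_filter, Finset.mem_range, testBit_idx, decide_eq_true_eq]
  exact ⟨fun h2 => h2.2, fun hb => ⟨Finset.mem_range.1 (h hb), hb⟩⟩

lemma S_subset_range (c : ℕ) : S n c ⊆ Finset.range n := Finset.filter_subset _ _

lemma idx_S {c : ℕ} (hc : c < 2 ^ n) : idx (S n c) = c := by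
  apply Nat.eq_of_testBit_eq
  intro b
  rw [testBit_idx]
  by_cases hb : b < n
  · simp [S, Finset.mem_filter, Finset.mem_range, hb, Bool.decide_iff]
  · have : c.testBit b = false := by
      apply Nat.testBit_lt_two_pow
      calc c < 2 ^ n := hc
        _ ≤ 2 ^ b := Nat.pow_le_pow_right (by norm_num) (by omega)
    simp [S, Finset.mem_filter, Finset.mem_range, hb, this]

lemma S_inj {c c' : ℕ} (hc : c < 2 ^ n) (hc' : c' < 2 ^ n) (h : S n c = S n c') : c = c' := by
  rw [← idx_S hc, ← idx_S hc', h]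

end Aux

section Gchar
variable {n : ℕ}

lemma mem_S_iff {x a : ℕ} : a ∈ S n x ↔ a < n ∧ x.testBit a := by
  simp [S, Finset.mem_filter, Finset.mem_range]

lemma mem_S_succ {x a : ℕ} : a ∈ S (n+1) x ↔ a ∈ S n (x % 2^n) ∨ (a = n ∧ x.testBit n) := by
  simp only [mem_S_iff, Nat.testBit_mod_two_pow]
  constructor
  · rintro ⟨h1, h2⟩
    rcases (by omega : a < n ∨ a = n) with h | h
    · left; exact ⟨h, by simp [h, h2]⟩
    · right; exact ⟨h, h ▸ h2⟩
  · rintro (⟨h1, h2⟩ | ⟨h1, h2⟩)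
    · simp only [Bool.and_eq_true, decide_eq_true_eq] at h2
      exact ⟨by omega, h2.2⟩
    · exact ⟨by omega, h1 ▸ h2⟩

lemma S_succ_subset {c i : ℕ} :
    S (n+1) c ⊆ S (n+1) i ↔
      (S n (c % 2^n) ⊆ S n (i % 2^n) ∧ (c.testBit n → i.testBit n)) := by
  constructor
  · intro h
    constructor
    · intro a ha
      have haN : a < n := (mem_S_iff.1 ha).1
      have : a ∈ S (n+1) i := h (mem_S_succ.2 (Or.inl ha))
      rcases mem_S_succ.1 this with h2 | h2
      · exact h2
      · omega
    · intro hc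
      have : n ∈ S (n+1) i := h (mem_S_succ.2 (Or.inr ⟨rfl, hc⟩))
      rcases mem_S_succ.1 this with h2 | h2
      · exact absurd (mem_S_iff.1 h2).1 (lt_irrefl n)
      · exact h2.2
  · rintro ⟨h1, h2⟩ a ha
    rcases mem_S_succ.1 ha with h3 | h3
    · exact mem_S_succ.2 (Or.inl (h1 h3))
    · exact mem_S_succ.2 (Or.inr ⟨h3.1, h2 h3.2⟩)

lemma testBit_high_div {x : ℕ} (hx : x < 2^(n+1)) : x.testBit n = (x / 2^n = 1) := by
  have hdiv : x / 2^n = 0 ∨ x / 2^n = 1 :=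
    by
      have h : x / 2^n < 2 := Nat.div_lt_of_lt_mul (by rw [← pow_succ]; omega)
      rcases Nat.lt_succ_iff_lt_or_eq.1 h with h2 | h2
      · exact Or.inl (Nat.lt_one_iff.1 h2)
      · exact Or.inr h2
  rw [Nat.testBit_eq_decide_div_mod_eq]
  rcases hdiv with h | h <;> simp [h]

lemma G_eq : ∀ n i c, i < 2^n → c < 2^n →
    G n i c = if S n c ⊆ S n i then 1 else 0 := by
  intro n
  induction n with
  | zero =>
    intro i c hi hc
    have hi0 : i = 0 := by simpa using hi
    have hc0 : c = 0 := by simpa using hc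
    subst hi0; subst hc0
    simp [G, S]
  | succ n ih =>
    intro i c hi hc
    have h2n : 0 < 2^n := Nat.two_pow_pos _
    have hi' : i % 2^n < 2^n := Nat.mod_lt _ h2n
    have hc' : c % 2^n < 2^n := Nat.mod_lt _ h2n
    have hidiv : i / 2^n = 0 ∨ i / 2^n = 1 :=
      by
      have h : i / 2^n < 2 := Nat.div_lt_of_lt_mul (by rw [← pow_succ]; omega)
      rcases Nat.lt_succ_iff_lt_or_eq.1 h with h2 | h2
      · exact Or.inl (Nat.lt_one_iff.1 h2)
      · exact Or.inr h2
    have hcdiv : c / 2^n = 0 ∨ c / 2^n = 1 :=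
      by
      have h : c / 2^n < 2 := Nat.div_lt_of_lt_mul (by rw [← pow_succ]; omega)
      rcases Nat.lt_succ_iff_lt_or_eq.1 h with h2 | h2
      · exact Or.inl (Nat.lt_one_iff.1 h2)
      · exact Or.inr h2
    have hG : G (n+1) i c = G2 (i / 2^n) (c / 2^n) * G n (i % 2^n) (c % 2^n) := rfl
    rw [hG, ih _ _ hi' hc']
    have hiff := S_succ_subset (n := n) (c := c) (i := i)
    rw [testBit_high_div hi, testBit_high_div hc] at hiff
    rw [if_congr hiff rfl rfl]
    rcases hidiv with h1 | h1 <;> rcases hcdiv with h2 | h2 <;>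
      simp [h1, h2, G2] <;>
      by_cases h3 : S n (c % 2^n) ⊆ S n (i % 2^n) <;> simp [h3]

lemma g_ne_zero_iff {m c : ℕ} (hm : m < 2^n) (hc : c < 2^n) :
    g n m c ≠ 0 ↔ S n c ⊆ S n m := by
  rw [g, G_eq n m c hm hc]
  by_cases h : S n c ⊆ S n m <;> simp [h]

end Gchar

section Weights
variable {n : ℕ}

lemma zmod2_cases (z : ZMod 2) : z = 0 ∨ z = 1 := by revert z; decide

lemma idx_union_disjoint {U V : Finset ℕ} (h : Disjoint U V) :
    idx (U ∪ V) = idx U + idx V := Finset.sum_union h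

lemma count_subsets {W : Finset ℕ} (hW : W ⊆ Finset.range n) :
    ((Finset.range (2^n)).filter fun c => S n c ⊆ W).card = 2 ^ W.card := by
  rw [← Finset.card_powerset]
  apply Finset.card_bij' (fun c _ => S n c) (fun U _ => idx U)
  · intro c hc
    simp only [Finset.mem_filter] at hc
    exact Finset.mem_powerset.2 hc.2
  · intro U hU
    have hU' : U ⊆ Finset.range n := (Finset.mem_powerset.1 hU).trans hW
    simp only [Finset.mem_filter, Finset.mem_range]
    exact ⟨idx_lt hU', by rw [S_idx hU']; exact Finset.mem_powerset.1 hU⟩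
  · intro c hc
    simp only [Finset.mem_filter, Finset.mem_range] at hc
    exact idx_S hc.1
  · intro U hU
    exact S_idx ((Finset.mem_powerset.1 hU).trans hW)

lemma wt_row {m : ℕ} (hm : m < 2^n) : wt n (g n m) = 2 ^ (S n m).card := by
  rw [wt, ← count_subsets (S_subset_range m)]
  congr 1
  apply Finset.filter_congr
  intro c hc
  simp only [Finset.mem_range] at hc
  simp [g_ne_zero_iff hm hc]

lemma wt_add_row {i j : ℕ} (hi : i < 2^n) (hj : j < 2^n) :
    wt n (g n i + g n j) + 2 * 2 ^ (S n i ∩ S n j).card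
      = 2 ^ (S n i).card + 2 ^ (S n j).card := by
  classical
  set R := Finset.range (2^n) with hR
  set A := R.filter fun c => g n i c ≠ 0 with hA
  set B := R.filter fun c => g n j c ≠ 0 with hB
  have hfil : R.filter (fun c => (g n i + g n j) c ≠ 0) = (A ∪ B) \ (A ∩ B) := by
    ext c
    simp only [hA, hB, Finset.mem_sdiff, Finset.mem_union, Finset.mem_inter,
      Finset.mem_filter, Pi.add_apply]
    rcases zmod2_cases (g n i c) with h1 | h1 <;>
      rcases zmod2_cases (g n j c) with h2 | h2 <;>
        simp [h1, h2] <;> tauto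
  have hsub : A ∩ B ⊆ A ∪ B := (Finset.inter_subset_left).trans Finset.subset_union_left
  have hcard1 : ((A ∪ B) \ (A ∩ B)).card + (A ∩ B).card = (A ∪ B).card :=
    Finset.card_sdiff_add_card_eq_card hsub
  have hcard2 : (A ∪ B).card + (A ∩ B).card = A.card + B.card :=
    Finset.card_union_add_card_inter A B
  have hAB : A ∩ B = R.filter fun c => S n c ⊆ S n i ∩ S n j := by
    ext c
    simp only [hA, hB, Finset.mem_inter, Finset.mem_filter]
    constructor
    · rintro ⟨⟨hc, h1⟩, _, h2⟩
      have hc' : c < 2^n := Finset.mem_range.1 hc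
      exact ⟨hc, Finset.subset_inter ((g_ne_zero_iff hi hc').1 h1)
        ((g_ne_zero_iff hj hc').1 h2)⟩
    · rintro ⟨hc, h1⟩
      have hc' : c < 2^n := Finset.mem_range.1 hc
      exact ⟨⟨hc, (g_ne_zero_iff hi hc').2 (h1.trans Finset.inter_subset_left)⟩,
        hc, (g_ne_zero_iff hj hc').2 (h1.trans Finset.inter_subset_right)⟩
  have hABcard : (A ∩ B).card = 2 ^ (S n i ∩ S n j).card := by
    rw [hAB]
    exact count_subsets ((Finset.inter_subset_left).trans (S_subset_range i))
  have hAcard : A.card = 2 ^ (S n i).card := wt_row hi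
  have hBcard : B.card = 2 ^ (S n j).card := wt_row hj
  have hwt : wt n (g n i + g n j) = ((A ∪ B) \ (A ∩ B)).card := by
    rw [wt, ← hfil]
  omega

lemma K_mem_card {i j : ℕ} (hi : i < 2^n) (hjK : j ∈ K n i) :
    i < j ∧ j < 2^n ∧ (S n j \ S n i).card = 1 ∧ (S n i \ S n j).card ≤ 1 := by
  rw [K, Finset.mem_filter, Finset.mem_Ico] at hjK
  obtain ⟨⟨hij, hj⟩, h1, h2⟩ := hjK
  rw [wt_row hi, wt_row hj] at *
  have hadd := wt_add_row hi hj
  set k := (S n i ∩ S n j).card with hk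
  set wi := (S n i).card with hwi
  set wj := (S n j).card with hwj
  have heq : 2 ^ wj = 2 * 2 ^ k := by omega
  have hwjk : wj = k + 1 := by
    have : (2:ℕ) ^ wj = 2 ^ (k+1) := by rw [heq]; ring
    exact Nat.pow_right_injective (le_refl 2) this
  have hle : wi ≤ wj := by
    have h2' : 2 ^ wi ≤ 2 ^ wj := by omega
    exact (Nat.pow_le_pow_iff_right (by norm_num)).1 h2'
  have hc1 : (S n j \ S n i).card + k = wj := by
    rw [hk, Finset.inter_comm]
    exact Finset.card_sdiff_add_card_inter _ _
  have hc2 : (S n i \ S n j).card + k = wi := Finset.card_sdiff_add_card_inter _ _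
  exact ⟨by omega, hj, by omega, by omega⟩

lemma K_swap_lt {i j a b : ℕ} (hi : i < 2^n) (hjK : j ∈ K n i)
    (ha : a ∈ S n i \ S n j) (hb : b ∈ S n j \ S n i) : a < b := by
  obtain ⟨hij, hj, hcb, hca⟩ := K_mem_card hi hjK
  have hSa : S n i \ S n j = {a} := by
    have hpos : 0 < (S n i \ S n j).card := Finset.card_pos.2 ⟨a, ha⟩
    obtain ⟨x, hx⟩ := Finset.card_eq_one.1 (by omega : (S n i \ S n j).card = 1)
    rw [hx] at ha ⊢
    rw [Finset.mem_singleton.1 ha]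
  have hSb : S n j \ S n i = {b} := by
    rcases Finset.card_eq_one.1 hcb with ⟨x, hx⟩
    rw [hx] at hb ⊢
    rw [Finset.mem_singleton.1 hb]
  have h1 : idx ((S n i \ S n j) ∪ (S n i ∩ S n j)) = 2 ^ a + idx (S n i ∩ S n j) := by
    rw [idx_union_disjoint (Finset.disjoint_sdiff_inter _ _), hSa]
    simp [idx]
  have h2 : (S n i \ S n j) ∪ (S n i ∩ S n j) = S n i := Finset.sdiff_union_inter _ _
  have hii : i = 2 ^ a + idx (S n i ∩ S n j) := by rw [← h1, h2]; exact (idx_S hi).symm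
  have h3 : idx ((S n j \ S n i) ∪ (S n j ∩ S n i)) = 2 ^ b + idx (S n i ∩ S n j) := by
    rw [idx_union_disjoint (Finset.disjoint_sdiff_inter _ _), hSb, Finset.inter_comm]
    simp [idx]
  have h4 : (S n j \ S n i) ∪ (S n j ∩ S n i) = S n j := Finset.sdiff_union_inter _ _
  have hjj : j = 2 ^ b + idx (S n i ∩ S n j) := by rw [← h3, h4]; exact (idx_S hj).symm
  have hpow : 2 ^ a < 2 ^ b := by omega
  exact (Nat.pow_lt_pow_iff_right (by norm_num)).1 hpow

end Weights

section PoSwaps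
variable {n : ℕ}

lemma po_of_swaps : ∀ (D X B : Finset ℕ) (φ : ℕ → ℕ),
    X ⊆ Finset.range n → B ⊆ Finset.range n → D ⊆ X → Disjoint B X →
    Set.InjOn φ D → (∀ a ∈ D, φ a ∈ B) → (∀ a ∈ D, a < φ a) →
    po n (idx X) (idx ((X \ D) ∪ B)) := by
  intro D
  induction D using Finset.induction_on with
  | empty =>
    intro X B φ hX hB _ hdisj _ _ _
    have hXB : (X \ ∅) ∪ B ⊆ Finset.range n := by
      intro x hx
      rcases Finset.mem_union.1 hx with h | h
      · exact hX (Finset.sdiff_subset h)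
      · exact hB h
    apply Relation.ReflTransGen.single
    refine ⟨idx_lt hX, idx_lt hXB, Or.inl ?_⟩
    rw [S_idx hX, S_idx hXB]
    simp only [Finset.sdiff_empty]
    exact Finset.subset_union_left
  | @insert a D ha ih =>
    intro X B φ hX hB hDX hdisj hinj hφB hlt
    have haX : a ∈ X := hDX (Finset.mem_insert_self a D)
    have hφa : φ a ∈ B := hφB a (Finset.mem_insert_self a D)
    have hφaX : φ a ∉ X := Finset.disjoint_left.1 hdisj hφa
    set X' := insert (φ a) (X \ {a}) with hX'
    have hX'sub : X' ⊆ Finset.range n := by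
      intro x hx
      rcases Finset.mem_insert.1 hx with h | h
      · exact h ▸ hB hφa
      · exact hX (Finset.sdiff_subset h)
    have hstep : poStep n (idx X) (idx X') := by
      refine ⟨idx_lt hX, idx_lt hX'sub,
        Or.inr ⟨a, φ a, ?_, ?_, hlt a (Finset.mem_insert_self a D), ?_⟩⟩
      · rw [S_idx hX]; exact haX
      · rw [S_idx hX]; exact hφaX
      · rw [S_idx hX, S_idx hX'sub]
    have htail : po n (idx X') (idx ((X' \ D) ∪ (B \ {φ a}))) := by
      apply ih X' (B \ {φ a}) φ hX'sub ((Finset.sdiff_subset).trans hB)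
      · intro x hx
        have hxa : x ≠ a := fun h => ha (h ▸ hx)
        exact Finset.mem_insert_of_mem
          (Finset.mem_sdiff.2 ⟨hDX (Finset.mem_insert_of_mem hx), by simp [hxa]⟩)
      · rw [Finset.disjoint_left]
        intro b hb hbX'
        have hb1 := Finset.mem_sdiff.1 hb
        rcases Finset.mem_insert.1 hbX' with h | h
        · exact hb1.2 (by simp [h])
        · exact Finset.disjoint_left.1 hdisj hb1.1 (Finset.sdiff_subset h)
      · exact hinj.mono (fun x hx => Finset.mem_insert_of_mem hx)
      · intro x hx
        refine Finset.mem_sdiff.2 ⟨hφB x (Finset.mem_insert_of_mem hx), ?_⟩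
        simp only [Finset.mem_singleton]
        intro hcontra
        have := hinj (Finset.mem_insert_of_mem hx) (Finset.mem_insert_self a D) hcontra
        exact ha (this ▸ hx)
      · intro x hx; exact hlt x (Finset.mem_insert_of_mem hx)
    have hsets : (X' \ D) ∪ (B \ {φ a}) = (X \ insert a D) ∪ B := by
      ext x
      constructor
      · intro hx
        rcases Finset.mem_union.1 hx with h | h
        · obtain ⟨hx1, hx2⟩ := Finset.mem_sdiff.1 h
          rcases Finset.mem_insert.1 hx1 with h1 | h1
          · exact Finset.mem_union_right _ (h1 ▸ hφa)
          · obtain ⟨hxX, hxa⟩ := Finset.mem_sdiff.1 h1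
            refine Finset.mem_union_left _ (Finset.mem_sdiff.2 ⟨hxX, ?_⟩)
            intro hc
            rcases Finset.mem_insert.1 hc with h2 | h2
            · exact hxa (Finset.mem_singleton.2 h2)
            · exact hx2 h2
        · exact Finset.mem_union_right _ (Finset.mem_sdiff.1 h).1
      · intro hx
        rcases Finset.mem_union.1 hx with h | h
        · obtain ⟨hxX, hxins⟩ := Finset.mem_sdiff.1 h
          refine Finset.mem_union_left _ (Finset.mem_sdiff.2 ⟨?_, ?_⟩)
          · exact Finset.mem_insert_of_mem (Finset.mem_sdiff.2
              ⟨hxX, fun hc => hxins (Finset.mem_singleton.1 hc ▸ Finset.mem_insert_self a D)⟩)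
          · exact fun hc => hxins (Finset.mem_insert_of_mem hc)
        · by_cases hxφ : x = φ a
          · subst hxφ
            refine Finset.mem_union_left _ (Finset.mem_sdiff.2 ⟨Finset.mem_insert_self _ _, ?_⟩)
            intro hc
            exact hφaX (hDX (Finset.mem_insert_of_mem hc))
          · exact Finset.mem_union_right _ (Finset.mem_sdiff.2 ⟨h, by simp [hxφ]⟩)
    rw [← hsets]
    exact Relation.ReflTransGen.head hstep htail

end PoSwaps

def xbit (b c : ℕ) : ZMod 2 := if c.testBit b then 1 else 0

section AffineWt
variable {n : ℕ}

lemma xbit_idx {b : ℕ} {U : Finset ℕ} : xbit b (idx U) = if b ∈ U then 1 else 0 := by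
  simp [xbit, testBit_idx]

lemma mem_T_iff {b i : ℕ} : b ∈ T n i ↔ b < n ∧ b ∉ S n i := by
  simp [T, Finset.mem_sdiff, Finset.mem_range]

lemma fb_eq_one_iff {x ρ : ZMod 2} : 1 + x + ρ = 1 ↔ x = ρ := by
  revert x ρ; decide

lemma wt_prod_affine (i : ℕ) (hi : i < 2 ^ n) (ρ : ℕ → ℕ → ZMod 2)
    (hρ : ∀ b c c' : ℕ, (∀ a ∈ S n i, c.testBit a = c'.testBit a) → ρ b c = ρ b c') :
    wt n (fun c => ∏ b ∈ T n i, (1 + xbit b c + ρ b c)) = 2 ^ (S n i).card := by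
  classical
  rw [wt, ← Finset.card_powerset]
  have hTr : T n i ⊆ Finset.range n := Finset.sdiff_subset
  set Φ : Finset ℕ → ℕ := fun U => idx (U ∪ (T n i).filter fun b => ρ b (idx U) = 1) with hΦ
  have hΦarg : ∀ U ⊆ S n i, (U ∪ (T n i).filter fun b => ρ b (idx U) = 1) ⊆ Finset.range n := by
    intro U hU x hx
    rcases Finset.mem_union.1 hx with h | h
    · exact S_subset_range i (hU h)
    · exact hTr (Finset.mem_filter.1 h).1
  have hbitsΦ : ∀ U, U ⊆ S n i → ∀ a ∈ S n i, (Φ U).testBit a = (idx U).testBit a := by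
    intro U hU a haSi
    rw [hΦ, testBit_idx, testBit_idx, decide_eq_decide]
    have haT : a ∉ T n i := fun h => (mem_T_iff.1 h).2 haSi
    simp only [Finset.mem_union, Finset.mem_filter]
    constructor
    · rintro (h | h)
      · exact h
      · exact absurd h.1 haT
    · exact fun h => Or.inl h
  have hΦsol : ∀ U, U ⊆ S n i → ∀ b ∈ T n i, 1 + xbit b (Φ U) + ρ b (Φ U) = 1 := by
    intro U hUsub b hb
    have hρeq : ρ b (Φ U) = ρ b (idx U) := hρ b _ _ (hbitsΦ U hUsub)
    have hxb : xbit b (Φ U) = ρ b (idx U) := by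
      rw [hΦ, xbit_idx]
      simp only [Finset.mem_union, Finset.mem_filter]
      rcases zmod2_cases (ρ b (idx U)) with h | h
      · have hcond : ¬ (b ∈ U ∨ b ∈ T n i ∧ ρ b (idx U) = 1) := by
          rintro (hc | hc)
          · exact (mem_T_iff.1 hb).2 (hUsub hc)
          · exact one_ne_zero (hc.2.symm.trans h)
        rw [if_neg hcond, h]
      · rw [if_pos (Or.inr ⟨hb, h⟩), h]
    rw [hρeq, hxb, fb_eq_one_iff]
  apply Finset.card_bij' (fun c _ => S n c ∩ S n i) (fun U _ => Φ U)
  · intro c _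
    exact Finset.mem_powerset.2 Finset.inter_subset_right
  · intro U hU
    have hUsub : U ⊆ S n i := Finset.mem_powerset.1 hU
    simp only [Finset.mem_filter, Finset.mem_range]
    refine ⟨idx_lt (hΦarg U hUsub), ?_⟩
    rw [Finset.prod_ne_zero_iff]
    intro b hb
    rw [hΦsol U hUsub b hb]
    exact one_ne_zero
  · intro c hc
    simp only [Finset.mem_filter, Finset.mem_range] at hc
    obtain ⟨hclt, hcprod⟩ := hc
    have hall : ∀ b ∈ T n i, 1 + xbit b c + ρ b c = 1 := by
      intro b hb
      have hne := Finset.prod_ne_zero_iff.1 hcprod b hb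
      rcases zmod2_cases (1 + xbit b c + ρ b c) with h | h
      · exact absurd h hne
      · exact h
    have hUsub : S n c ∩ S n i ⊆ S n i := Finset.inter_subset_right
    have hbits : ∀ a ∈ S n i, (idx (S n c ∩ S n i)).testBit a = c.testBit a := by
      intro a haSi
      rw [testBit_idx]
      by_cases h : c.testBit a
      · have hmem : a ∈ S n c ∩ S n i :=
          Finset.mem_inter.2 ⟨mem_S_iff.2 ⟨(mem_S_iff.1 haSi).1, h⟩, haSi⟩
        simp [hmem, h]
      · have hmem : a ∉ S n c ∩ S n i :=
          fun hc2 => h ((mem_S_iff.1 (Finset.mem_inter.1 hc2).1).2)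
        simp [hmem, h]
    apply S_inj (idx_lt (hΦarg _ hUsub)) hclt
    rw [S_idx (hΦarg _ hUsub)]
    ext b
    simp only [Finset.mem_union, Finset.mem_filter]
    by_cases hbn : b < n
    · by_cases hbS : b ∈ S n i
      · have hbT : b ∉ T n i := fun h => (mem_T_iff.1 h).2 hbS
        constructor
        · rintro (h | h)
          · exact (Finset.mem_inter.1 h).1
          · exact absurd h.1 hbT
        · intro h; exact Or.inl (Finset.mem_inter.2 ⟨h, hbS⟩)
      · have hbT : b ∈ T n i := mem_T_iff.2 ⟨hbn, hbS⟩
        have hfb := hall b hbT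
        rw [fb_eq_one_iff] at hfb
        have hρc : ρ b (idx (S n c ∩ S n i)) = ρ b c := hρ b _ _ hbits
        constructor
        · rintro (h | h)
          · exact absurd (Finset.mem_inter.1 h).2 hbS
          · have h1 : xbit b c = 1 := by rw [hfb, ← hρc, h.2]
            rw [xbit] at h1
            by_cases htb : c.testBit b
            · exact mem_S_iff.2 ⟨hbn, htb⟩
            · rw [if_neg htb] at h1; exact absurd h1 zero_ne_one
        · intro h
          refine Or.inr ⟨hbT, ?_⟩
          have htb := (mem_S_iff.1 h).2
          rw [hρc, ← hfb, xbit, if_pos htb]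
    · constructor
      · rintro (h | h)
        · exact absurd (Finset.mem_range.1 (S_subset_range c (Finset.mem_inter.1 h).1)) hbn
        · exact absurd (Finset.mem_range.1 (hTr h.1)) hbn
      · intro h
        exact absurd (mem_S_iff.1 h).1 hbn
  · intro U hU
    have hUsub : U ⊆ S n i := Finset.mem_powerset.1 hU
    show S n (idx (U ∪ (T n i).filter fun b => ρ b (idx U) = 1)) ∩ S n i = U
    rw [S_idx (hΦarg U hUsub)]
    ext b
    simp only [Finset.mem_inter, Finset.mem_union, Finset.mem_filter]
    constructor
    · rintro ⟨h | h, hbS⟩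
      · exact h
      · exact absurd hbS (mem_T_iff.1 h.1).2
    · intro h
      exact ⟨Or.inl h, hUsub h⟩

end AffineWt

section Expansion

/-- elements of J whose support contains b -/
def Jb (n : ℕ) (J : Finset ℕ) (b : ℕ) : Finset ℕ := J.filter fun j => b ∈ S n j

def rr (n i j c : ℕ) : ZMod 2 := ∏ a ∈ S n i \ S n j, (1 + xbit a c)

def rho (n i : ℕ) (J : Finset ℕ) (b c : ℕ) : ZMod 2 := ∑ j ∈ Jb n J b, rr n i j c

def vf (n i : ℕ) (J : Finset ℕ) (c : ℕ) : ZMod 2 :=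
  ∏ b ∈ T n i, (1 + xbit b c + rho n i J b c)

abbrev SigT := (B : Finset ℕ) × (∀ a ∈ B, ℕ)

def Dp (n i : ℕ) (p : SigT) : Finset ℕ :=
  p.1.attach.biUnion fun x => S n i \ S n (p.2 x.1 x.2)

def mf (n i : ℕ) (p : SigT) : ℕ := idx ((S n i \ Dp n i p) ∪ p.1)

def Om (n i : ℕ) (J : Finset ℕ) : Finset SigT :=
  (T n i).powerset.sigma fun B => B.pi fun b => Jb n J b

variable {n : ℕ}

lemma Dp_subset {i : ℕ} (p : SigT) : Dp n i p ⊆ S n i := by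
  apply Finset.biUnion_subset.2
  intro x _
  exact Finset.sdiff_subset

lemma mf_arg_subset {i : ℕ} {p : SigT} (hB : p.1 ⊆ T n i) :
    (S n i \ Dp n i p) ∪ p.1 ⊆ Finset.range n := by
  intro x hx
  rcases Finset.mem_union.1 hx with h | h
  · exact S_subset_range i (Finset.sdiff_subset h)
  · exact (Finset.sdiff_subset : T n i ⊆ Finset.range n) (hB h)

lemma mf_lt {i : ℕ} {p : SigT} (hB : p.1 ⊆ T n i) : mf n i p < 2 ^ n :=
  idx_lt (mf_arg_subset hB)

lemma S_mf {i : ℕ} {p : SigT} (hB : p.1 ⊆ T n i) :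
    S n (mf n i p) = (S n i \ Dp n i p) ∪ p.1 := S_idx (mf_arg_subset hB)

lemma mf_sdiff_right {i : ℕ} {p : SigT} (hB : p.1 ⊆ T n i) :
    S n (mf n i p) \ S n i = p.1 := by
  rw [S_mf hB]
  ext e
  simp only [Finset.mem_sdiff, Finset.mem_union]
  constructor
  · rintro ⟨h1 | h1, h2⟩
    · exact absurd h1.1 h2
    · exact h1
  · intro h
    exact ⟨Or.inr h, (mem_T_iff.1 (hB h)).2⟩

lemma mf_sdiff_left {i : ℕ} {p : SigT} (hB : p.1 ⊆ T n i) :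
    S n i \ S n (mf n i p) = Dp n i p := by
  rw [S_mf hB]
  ext e
  simp only [Finset.mem_sdiff, Finset.mem_union]
  constructor
  · rintro ⟨h1, h2⟩
    by_contra he
    exact h2 (Or.inl ⟨h1, he⟩)
  · intro h
    refine ⟨Dp_subset p h, ?_⟩
    rintro (h1 | h1)
    · exact h1.2 h
    · exact (mem_T_iff.1 (hB h1)).2 (Dp_subset p h)

lemma one_add_xbit_ne_zero {a c : ℕ} : (1 + xbit a c ≠ 0) ↔ c.testBit a = false := by
  by_cases h : c.testBit a <;> simp [xbit, h] <;> decide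

lemma zmod2_eq_of_ne_iff {u v : ZMod 2} (h : (u ≠ 0) ↔ (v ≠ 0)) : u = v := by
  rcases zmod2_cases u with hu | hu <;> rcases zmod2_cases v with hv | hv <;>
    subst hu <;> subst hv <;> first
      | rfl
      | (exfalso
         rcases h with ⟨h1, h2⟩
         first
           | exact h1 one_ne_zero rfl
           | exact h2 one_ne_zero rfl)

lemma rr_ne_zero {i j c : ℕ} :
    rr n i j c ≠ 0 ↔ ∀ a ∈ S n i \ S n j, c.testBit a = false := by
  rw [rr, Finset.prod_ne_zero_iff]
  exact ⟨fun h a ha => one_add_xbit_ne_zero.1 (h a ha),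
    fun h a ha => one_add_xbit_ne_zero.2 (h a ha)⟩

lemma term_eq_row {i c : ℕ} (hc : c < 2 ^ n) {p : SigT} (hB : p.1 ⊆ T n i) :
    (∏ x ∈ p.1.attach, rr n i (p.2 x.1 x.2) c) * (∏ b ∈ T n i \ p.1, (1 + xbit b c))
      = g n (mf n i p) c := by
  apply zmod2_eq_of_ne_iff
  rw [mul_ne_zero_iff, Finset.prod_ne_zero_iff, g_ne_zero_iff (mf_lt hB) hc, S_mf hB,
    Finset.prod_ne_zero_iff]
  constructor
  · rintro ⟨h1, h2⟩ e he
    have heb : c.testBit e = true := (mem_S_iff.1 he).2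
    have hen : e < n := (mem_S_iff.1 he).1
    by_cases heS : e ∈ S n i
    · refine Finset.mem_union_left _ (Finset.mem_sdiff.2 ⟨heS, ?_⟩)
      intro heD
      obtain ⟨x, hx, hex⟩ := Finset.mem_biUnion.1 heD
      have := rr_ne_zero.1 (h1 x hx) e hex
      rw [heb] at this
      exact Bool.noConfusion this
    · by_cases heB : e ∈ p.1
      · exact Finset.mem_union_right _ heB
      · have heT : e ∈ T n i \ p.1 :=
          Finset.mem_sdiff.2 ⟨mem_T_iff.2 ⟨hen, heS⟩, heB⟩
        have := one_add_xbit_ne_zero.1 (h2 e heT)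
        rw [heb] at this
        exact Bool.noConfusion this
  · intro h
    constructor
    · intro x hx
      rw [rr_ne_zero]
      intro a ha
      by_contra hab
      have hatrue : c.testBit a = true := by
        rcases Bool.eq_false_or_eq_true (c.testBit a) with h' | h'
        · exact h'
        · exact absurd h' hab
      have haS : a ∈ S n i := Finset.sdiff_subset ha
      have haSc : a ∈ S n c :=
        mem_S_iff.2 ⟨Finset.mem_range.1 (S_subset_range i haS), hatrue⟩
      rcases Finset.mem_union.1 (h haSc) with h' | h'
      · exact (Finset.mem_sdiff.1 h').2 (Finset.mem_biUnion.2 ⟨x, hx, ha⟩)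
      · exact (mem_T_iff.1 (hB h')).2 haS
    · intro b hb
      rw [one_add_xbit_ne_zero]
      by_contra hbb
      have hbtrue : c.testBit b = true := by
        rcases Bool.eq_false_or_eq_true (c.testBit b) with h' | h'
        · exact h'
        · exact absurd h' hbb
      obtain ⟨hbT, hbB⟩ := Finset.mem_sdiff.1 hb
      have hbSc : b ∈ S n c := mem_S_iff.2 ⟨(mem_T_iff.1 hbT).1, hbtrue⟩
      rcases Finset.mem_union.1 (h hbSc) with h' | h'
      · exact (mem_T_iff.1 hbT).2 (Finset.mem_sdiff.1 h').1
      · exact hbB h'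

lemma vf_expand {i c : ℕ} {J : Finset ℕ} (hc : c < 2 ^ n) :
    vf n i J c = ∑ p ∈ Om n i J, g n (mf n i p) c := by
  rw [vf]
  have h1 : ∀ b ∈ T n i,
      (1 + xbit b c + rho n i J b c) = (rho n i J b c + (1 + xbit b c)) :=
    fun b _ => by ring
  rw [Finset.prod_congr rfl h1, Finset.prod_add, Om, Finset.sum_sigma]
  apply Finset.sum_congr rfl
  intro B hBmem
  have hB : B ⊆ T n i := Finset.mem_powerset.1 hBmem
  have h2 := Finset.prod_sum (s := B) (t := fun b => Jb n J b)
    (f := fun b j => rr n i j c)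
  rw [show ∏ b ∈ B, rho n i J b c = ∏ b ∈ B, ∑ j ∈ Jb n J b, rr n i j c from rfl,
    h2, Finset.sum_mul]
  apply Finset.sum_congr rfl
  intro σ hσ
  exact term_eq_row hc (p := ⟨B, σ⟩) hB

lemma wt_vf {i : ℕ} (hi : i < 2 ^ n) (J : Finset ℕ) :
    wt n (vf n i J) = 2 ^ (S n i).card := by
  have hdep : ∀ b c c' : ℕ, (∀ a ∈ S n i, c.testBit a = c'.testBit a) →
      rho n i J b c = rho n i J b c' := by
    intro b c c' hcc
    apply Finset.sum_congr rfl
    intro j _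
    apply Finset.prod_congr rfl
    intro a ha
    rw [xbit, xbit, hcc a (Finset.sdiff_subset ha)]
  exact wt_prod_affine i hi (rho n i J) hdep

lemma mf_empty {i : ℕ} (hi : i < 2 ^ n) (σ : ∀ a ∈ (∅ : Finset ℕ), ℕ) :
    mf n i ⟨∅, σ⟩ = i := by
  have hD : Dp n i ⟨∅, σ⟩ = ∅ := by simp [Dp]
  rw [mf, hD]
  simp only [Finset.sdiff_empty, Finset.union_empty]
  exact idx_S hi

lemma K_bit {i j b : ℕ} (hi : i < 2 ^ n) (hjK : j ∈ K n i)
    (hb : b ∈ S n j) (hbi : b ∉ S n i) : S n j \ S n i = {b} := by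
  obtain ⟨_, _, hcard, _⟩ := K_mem_card hi hjK
  obtain ⟨x, hx⟩ := Finset.card_eq_one.1 hcard
  have hbx : b ∈ S n j \ S n i := Finset.mem_sdiff.2 ⟨hb, hbi⟩
  rw [hx] at hbx ⊢
  rw [← Finset.mem_singleton.1 hbx]

lemma Dp_singleton {i b : ℕ} (σ : ∀ a ∈ ({b} : Finset ℕ), ℕ) :
    Dp n i ⟨{b}, σ⟩ = S n i \ S n (σ b (Finset.mem_singleton_self b)) := by
  ext e
  rw [Dp]
  simp only [Finset.mem_biUnion, Finset.mem_attach, true_and]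
  constructor
  · rintro ⟨x, hx⟩
    have hxe : x = ⟨b, Finset.mem_singleton_self b⟩ :=
      Subtype.ext (Finset.mem_singleton.1 x.2)
    rwa [hxe] at hx
  · intro he
    exact ⟨⟨b, Finset.mem_singleton_self b⟩, he⟩

lemma mf_singleton {i b : ℕ} {J : Finset ℕ} (hi : i < 2 ^ n) (hJK : J ⊆ K n i)
    (hb : b ∈ T n i) (σ : ∀ a ∈ ({b} : Finset ℕ), ℕ)
    (hσ : σ b (Finset.mem_singleton_self b) ∈ Jb n J b) :
    mf n i ⟨{b}, σ⟩ = σ b (Finset.mem_singleton_self b) := by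
  set j0 := σ b (Finset.mem_singleton_self b) with hj0
  obtain ⟨hj0J, hbj0⟩ := Finset.mem_filter.1 hσ
  have hj0K : j0 ∈ K n i := hJK hj0J
  have hj0lt : j0 < 2 ^ n := (K_mem_card hi hj0K).2.1
  have hbset : S n j0 \ S n i = {b} := K_bit hi hj0K hbj0 (mem_T_iff.1 hb).2
  have hD : Dp n i ⟨{b}, σ⟩ = S n i \ S n j0 := Dp_singleton σ
  rw [mf]
  rw [show (⟨{b}, σ⟩ : SigT).1 = {b} from rfl, hD,
     Finset.sdiff_sdiff_self_left, ← hbset, Finset.inter_comm, Finset.union_comm,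
     Finset.sdiff_union_inter]
  exact idx_S hj0lt

end Expansion

lemma nsmul_zmod2 (k : ℕ) (z : ZMod 2) : k • z = if Even k then 0 else z := by
  induction k with
  | zero => simp
  | succ m ih =>
    rw [succ_nsmul, ih]
    rcases Nat.even_or_odd m with h | h
    · rw [if_pos h, if_neg (by simp [Nat.even_add_one, h])]
      exact zero_add z
    · have h' : ¬ Even m := Nat.not_even_iff_odd.2 h
      rw [if_neg h', if_pos (by simp [Nat.even_add_one, h'])]
      rcases zmod2_cases z with hz | hz <;> subst hz <;> decide

/-- if I satisfies POP, i ∈ I with w(g_i) = w_min, then for every J ⊆ K_i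
there exists M ⊆ (I ∩ [i+1,N−1]) \ K_i with w(g_i ⊕ ⊕_{j∈J} g_j ⊕ ⊕_{m∈M} g_m) = w_min. -/
theorem M_construction_exists (n : ℕ) (hn : 1 ≤ n) (I : Finset ℕ) (hI : I.Nonempty)
    (hIr : ∀ x ∈ I, x < 2 ^ n) (hPOP : POP n I)
    (wmin : ℕ) (hw : wmin = I.inf' hI fun x => wt n (g n x))
    (i : ℕ) (hiI : i ∈ I) (hwi : wt n (g n i) = wmin)
    (J : Finset ℕ) (hJ : J ⊆ K n i) :
    ∃ M : Finset ℕ, M ⊆ (I.filter fun m => i < m) \ K n i ∧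
      wt n (g n i + ∑ j ∈ J, g n j + ∑ m ∈ M, g n m) = wmin := by
  classical
  have hi : i < 2 ^ n := hIr i hiI
  -- basic membership facts about Om
  have hmemΩ : ∀ p ∈ Om n i J, p.1 ⊆ T n i ∧ ∀ (a : ℕ) (ha : a ∈ p.1), p.2 a ha ∈ Jb n J a := by
    intro p hp
    rw [Om, Finset.mem_sigma] at hp
    exact ⟨Finset.mem_powerset.1 hp.1, fun a ha => Finset.mem_pi.1 hp.2 a ha⟩
  have hval : ∀ p ∈ Om n i J, ∀ (b : ℕ) (hb : b ∈ p.1),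
      p.2 b hb ∈ J ∧ p.2 b hb ∈ K n i ∧ b ∈ S n (p.2 b hb) ∧ b ∉ S n i := by
    intro p hp b hb
    obtain ⟨hB, hσ⟩ := hmemΩ p hp
    obtain ⟨hjJ, hjb⟩ := Finset.mem_filter.1 (hσ b hb)
    exact ⟨hjJ, hJ hjJ, hjb, (mem_T_iff.1 (hB hb)).2⟩
  have hswap : ∀ p ∈ Om n i J, ∀ a ∈ Dp n i p, ∃ (b : ℕ) (hb : b ∈ p.1),
      a ∈ S n i \ S n (p.2 b hb) ∧ a < b := by
    intro p hp a ha
    obtain ⟨x, _, hax⟩ := Finset.mem_biUnion.1 ha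
    refine ⟨x.1, x.2, hax, ?_⟩
    obtain ⟨hjJ, hjK, hbS, hbnS⟩ := hval p hp x.1 x.2
    exact K_swap_lt hi hjK hax (Finset.mem_sdiff.2 ⟨hbS, hbnS⟩)
  -- the fiber of i is the single point p0
  set p0 : SigT := ⟨∅, fun a ha => absurd ha (Finset.notMem_empty a)⟩ with hp0
  have hp0Ω : p0 ∈ Om n i J := by
    rw [Om, Finset.mem_sigma]
    constructor
    · exact Finset.empty_mem_powerset _
    · rw [Finset.mem_pi]
      intro a ha
      exact absurd ha (Finset.notMem_empty a)
  have hmfp0 : mf n i p0 = i := mf_empty hi _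
  have hfib_i : (Om n i J).filter (fun p => mf n i p = i) = {p0} := by
    apply Finset.eq_singleton_iff_unique_mem.2
    refine ⟨Finset.mem_filter.2 ⟨hp0Ω, hmfp0⟩, ?_⟩
    intro p hp
    obtain ⟨hpΩ, hpmf⟩ := Finset.mem_filter.1 hp
    obtain ⟨hB, _⟩ := hmemΩ p hpΩ
    have hBempty : p.1 = ∅ := by
      have h1 : S n (mf n i p) \ S n i = p.1 := mf_sdiff_right hB
      rw [hpmf, Finset.sdiff_self] at h1
      exact h1.symm
    obtain ⟨B, σ'⟩ := p
    have hB0 : B = ∅ := hBempty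
    subst hB0
    have hσeq : σ' = (fun a ha => absurd ha (Finset.notMem_empty a)) := by
      funext a ha
      exact absurd ha (Finset.notMem_empty a)
    rw [hp0, hσeq]
  -- the fiber of each j ∈ J is also a single point
  have hfib_j : ∀ j ∈ J, ∃ pj ∈ Om n i J, mf n i pj = j ∧
      (Om n i J).filter (fun p => mf n i p = j) = {pj} := by
    intro j hjJ
    have hjK : j ∈ K n i := hJ hjJ
    obtain ⟨hij, hjlt, hcard1, hcard2⟩ := K_mem_card hi hjK
    obtain ⟨b, hbset⟩ := Finset.card_eq_one.1 hcard1
    have hbmem : b ∈ S n j \ S n i := hbset ▸ Finset.mem_singleton_self b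
    have hbSj : b ∈ S n j := (Finset.mem_sdiff.1 hbmem).1
    have hbSi : b ∉ S n i := (Finset.mem_sdiff.1 hbmem).2
    have hbT : b ∈ T n i := mem_T_iff.2 ⟨Finset.mem_range.1 (S_subset_range j hbSj), hbSi⟩
    refine ⟨⟨{b}, fun _ _ => j⟩, ?_, ?_, ?_⟩
    · rw [Om, Finset.mem_sigma]
      constructor
      · exact Finset.mem_powerset.2 (Finset.singleton_subset_iff.2 hbT)
      · rw [Finset.mem_pi]
        intro a ha
        have hab : a = b := Finset.mem_singleton.1 ha
        subst hab
        exact Finset.mem_filter.2 ⟨hjJ, hbSj⟩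
    · exact mf_singleton hi hJ hbT (fun _ _ => j) (Finset.mem_filter.2 ⟨hjJ, hbSj⟩)
    · apply Finset.eq_singleton_iff_unique_mem.2
      constructor
      · refine Finset.mem_filter.2 ⟨?_, ?_⟩
        · rw [Om, Finset.mem_sigma]
          constructor
          · exact Finset.mem_powerset.2 (Finset.singleton_subset_iff.2 hbT)
          · rw [Finset.mem_pi]
            intro a ha
            have hab : a = b := Finset.mem_singleton.1 ha
            subst hab
            exact Finset.mem_filter.2 ⟨hjJ, hbSj⟩
        · exact mf_singleton hi hJ hbT (fun _ _ => j) (Finset.mem_filter.2 ⟨hjJ, hbSj⟩)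
      · intro p hp
        obtain ⟨hpΩ, hpmf⟩ := Finset.mem_filter.1 hp
        obtain ⟨hB, hσ⟩ := hmemΩ p hpΩ
        have hBeq : p.1 = {b} := by
          have h1 := mf_sdiff_right hB
          rw [hpmf] at h1
          rw [← h1]
          exact hbset
        obtain ⟨B, σ⟩ := p
        have hBeq' : B = {b} := hBeq
        subst hBeq'
        have hj0 : σ b (Finset.mem_singleton_self b) = j := by
          have hmem := hσ b (Finset.mem_singleton_self b)
          have h2 : mf n i ⟨{b}, σ⟩ = σ b (Finset.mem_singleton_self b) :=
            mf_singleton hi hJ hbT σ hmem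
          rw [← h2]
          exact hpmf
        have hσeq : σ = (fun (a : ℕ) (_ : a ∈ ({b} : Finset ℕ)) => j) := by
          funext a ha
          have hab : a = b := Finset.mem_singleton.1 ha
          subst hab
          exact hj0
        rw [hσeq]
  -- fiberwise resummation
  have hsum_fib : ∀ c : ℕ, ∑ p ∈ Om n i J, g n (mf n i p) c
      = ∑ y ∈ (Om n i J).image (mf n i),
          ((Om n i J).filter fun p => mf n i p = y).card • g n y c := by
    intro c
    rw [← Finset.sum_fiberwise_of_maps_to (g := mf n i)
      (fun p hp => Finset.mem_image_of_mem _ hp) (fun p => g n (mf n i p) c)]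
    apply Finset.sum_congr rfl
    intro y hy
    rw [Finset.sum_congr rfl (fun p hp => by rw [(Finset.mem_filter.1 hp).2]),
      Finset.sum_const]
  have hsum_preM : ∀ c : ℕ,
      (∑ y ∈ (Om n i J).image (mf n i),
        ((Om n i J).filter fun p => mf n i p = y).card • g n y c)
      = ∑ y ∈ ((Om n i J).image (mf n i)).filter
          (fun y => ¬ Even (((Om n i J).filter fun p => mf n i p = y).card)),
          g n y c := by
    intro c
    rw [Finset.sum_filter]
    apply Finset.sum_congr rfl
    intro y _
    rw [nsmul_zmod2]
    by_cases h : Even (((Om n i J).filter fun p => mf n i p = y).card) <;> simp [h]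
  set preM := ((Om n i J).image (mf n i)).filter
      (fun y => ¬ Even (((Om n i J).filter fun p => mf n i p = y).card)) with hpreM
  have hiJ_sub : insert i J ⊆ preM := by
    intro y hy
    rcases Finset.mem_insert.1 hy with h | h
    · subst h
      refine Finset.mem_filter.2 ⟨Finset.mem_image.2 ⟨p0, hp0Ω, hmfp0⟩, ?_⟩
      rw [hfib_i]
      simp
    · obtain ⟨pj, hpjΩ, hmfpj, hfj⟩ := hfib_j y h
      refine Finset.mem_filter.2 ⟨Finset.mem_image.2 ⟨pj, hpjΩ, hmfpj⟩, ?_⟩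
      rw [hfj]
      simp
  have hiJ_notmem : i ∉ J := fun h => lt_irrefl i (K_mem_card hi (hJ h)).1
  refine ⟨preM \ insert i J, ?_, ?_⟩
  · -- the membership conditions
    intro y hy
    obtain ⟨hypreM, hynotiJ⟩ := Finset.mem_sdiff.1 hy
    obtain ⟨hyimg, hodd⟩ := Finset.mem_filter.1 hypreM
    obtain ⟨p, hpΩ, hpmf⟩ := Finset.mem_image.1 hyimg
    obtain ⟨hB, hσ⟩ := hmemΩ p hpΩ
    have hyi : y ≠ i := fun h => hynotiJ (Finset.mem_insert.2 (Or.inl h))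
    have hyJ : y ∉ J := fun h => hynotiJ (Finset.mem_insert.2 (Or.inr h))
    have hBne : p.1.Nonempty := by
      rcases Finset.eq_empty_or_nonempty p.1 with h | h
      · exfalso
        apply hyi
        rw [← hpmf]
        obtain ⟨B, σ'⟩ := p
        have hB0 : B = ∅ := h
        subst hB0
        exact mf_empty hi σ'
      · exact h
    have hB2 : 2 ≤ p.1.card := by
      by_contra hcon
      have hc1 : p.1.card = 1 := by
        have := Finset.card_pos.2 hBne
        omega
      obtain ⟨b, hbeq⟩ := Finset.card_eq_one.1 hc1
      apply hyJ
      rw [← hpmf]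
      obtain ⟨B, σ'⟩ := p
      have hbeq' : B = {b} := hbeq
      subst hbeq'
      have hbT : b ∈ T n i := hB (Finset.mem_singleton_self b)
      have hmem : σ' b (Finset.mem_singleton_self b) ∈ Jb n J b :=
        hσ b (Finset.mem_singleton_self b)
      rw [mf_singleton hi hJ hbT σ' hmem]
      exact (Finset.mem_filter.1 hmem).1
    have hylt : y < 2 ^ n := by rw [← hpmf]; exact mf_lt hB
    have hSy_r : S n y \ S n i = p.1 := by rw [← hpmf]; exact mf_sdiff_right hB
    -- y ∉ K n i
    have hyK : y ∉ K n i := by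
      intro hyKmem
      obtain ⟨_, _, hc1, _⟩ := K_mem_card hi hyKmem
      rw [hSy_r] at hc1
      omega
    -- i < y
    have hic : i < y := by
      have hdisj1 : Disjoint (S n i \ Dp n i p) (Dp n i p) := Finset.sdiff_disjoint
      have hdisj2 : Disjoint (S n i \ Dp n i p) p.1 := by
        rw [Finset.disjoint_left]
        intro x hx hxB
        exact (mem_T_iff.1 (hB hxB)).2 (Finset.mem_sdiff.1 hx).1
      have hieq : i = idx (S n i \ Dp n i p) + idx (Dp n i p) := by
        rw [← idx_union_disjoint hdisj1, Finset.sdiff_union_of_subset (Dp_subset p)]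
        exact (idx_S hi).symm
      have hyeq : y = idx (S n i \ Dp n i p) + idx p.1 := by
        rw [← hpmf, mf, idx_union_disjoint hdisj2]
      have hkey : idx (Dp n i p) < idx p.1 := by
        rcases Finset.eq_empty_or_nonempty (Dp n i p) with hD | hD
        · obtain ⟨b, hb⟩ := hBne
          have hle : 2 ^ b ≤ idx p.1 :=
            Finset.single_le_sum (f := fun a => 2 ^ a) (fun _ _ => Nat.zero_le _) hb
          have hpos : 0 < 2 ^ b := Nat.two_pow_pos _
          have h0 : idx (∅ : Finset ℕ) = 0 := by simp [idx]
          rw [hD, h0]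
          omega
        · have ha0mem : (Dp n i p).max' hD ∈ Dp n i p := Finset.max'_mem _ hD
          obtain ⟨b0, hb0, hab, hab2⟩ := hswap p hpΩ _ ha0mem
          have h1 : idx (Dp n i p) < 2 ^ ((Dp n i p).max' hD + 1) :=
            idx_lt (fun x hx => Finset.mem_range.2
              (by have := Finset.le_max' _ x hx; omega))
          have h2 : (2:ℕ) ^ ((Dp n i p).max' hD + 1) ≤ 2 ^ b0 :=
            Nat.pow_le_pow_right (by norm_num) (by omega)
          have h3 : (2:ℕ) ^ b0 ≤ idx p.1 :=
            Finset.single_le_sum (f := fun a => 2 ^ a) (fun _ _ => Nat.zero_le _) hb0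
          omega
      omega
    -- y ∈ I via POP
    have hpoy : po n i y := by
      set jOf : ℕ → ℕ := fun b => if h : b ∈ p.1 then p.2 b h else 0 with hjOf
      have hjOfval : ∀ b ∈ p.1, jOf b ∈ J ∧ jOf b ∈ K n i ∧ b ∈ S n (jOf b) ∧ b ∉ S n i := by
        intro b hb
        have : jOf b = p.2 b hb := by rw [hjOf]; simp only; rw [dif_pos hb]
        rw [this]
        exact hval p hpΩ b hb
      have hPex : ∀ a ∈ Dp n i p, ∃ b, b ∈ p.1 ∧ a ∈ S n i \ S n (jOf b) := by
        intro a ha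
        obtain ⟨b, hb, h1, _⟩ := hswap p hpΩ a ha
        refine ⟨b, hb, ?_⟩
        have : jOf b = p.2 b hb := by rw [hjOf]; simp only; rw [dif_pos hb]
        rw [this]
        exact h1
      set φ : ℕ → ℕ := fun a =>
        if h : ∃ b, b ∈ p.1 ∧ a ∈ S n i \ S n (jOf b) then h.choose else 0 with hφ
      have hφmem : ∀ a ∈ Dp n i p, φ a ∈ p.1 ∧ a ∈ S n i \ S n (jOf (φ a)) := by
        intro a ha
        have hp := hPex a ha
        have hφa : φ a = hp.choose := by rw [hφ]; simp only; rw [dif_pos hp]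
        rw [hφa]
        exact hp.choose_spec
      have hφlt : ∀ a ∈ Dp n i p, a < φ a := by
        intro a ha
        obtain ⟨h1, h2⟩ := hφmem a ha
        obtain ⟨_, hK2, hS2, hnS2⟩ := hjOfval (φ a) h1
        exact K_swap_lt hi hK2 h2 (Finset.mem_sdiff.2 ⟨hS2, hnS2⟩)
      have hφinj : Set.InjOn φ (Dp n i p) := by
        intro a ha a' ha' heq
        obtain ⟨h1, h2⟩ := hφmem a (Finset.mem_coe.1 ha)
        obtain ⟨h1', h2'⟩ := hφmem a' (Finset.mem_coe.1 ha')
        rw [← heq] at h2'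
        obtain ⟨_, hK2, _, _⟩ := hjOfval (φ a) h1
        have hcard := (K_mem_card hi hK2).2.2.2
        exact Finset.card_le_one.1 hcard a h2 a' h2'
      have hdisjBS : Disjoint p.1 (S n i) := by
        rw [Finset.disjoint_left]
        intro b hb hbS
        exact (mem_T_iff.1 (hB hb)).2 hbS
      have hpo := po_of_swaps (Dp n i p) (S n i) p.1 φ (S_subset_range i)
        (fun b hb => Finset.mem_range.2 (mem_T_iff.1 (hB hb)).1) (Dp_subset p)
        hdisjBS hφinj (fun a ha => (hφmem a ha).1) hφlt
      rw [idx_S hi] at hpo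
      have : idx ((S n i \ Dp n i p) ∪ p.1) = y := hpmf
      rw [this] at hpo
      exact hpo
    have hyI : y ∈ I := hPOP i hiI y hylt hpoy
    exact Finset.mem_sdiff.2 ⟨Finset.mem_filter.2 ⟨hyI, hic⟩, hyK⟩
  · -- the weight
    have hpoint : ∀ c, c < 2 ^ n →
        (g n i + ∑ j ∈ J, g n j + ∑ m ∈ preM \ insert i J, g n m) c = vf n i J c := by
      intro c hc
      rw [Pi.add_apply, Pi.add_apply, Finset.sum_apply, Finset.sum_apply,
        vf_expand hc, hsum_fib c, hsum_preM c, ← Finset.sum_sdiff hiJ_sub,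
        Finset.sum_insert hiJ_notmem]
      ring
    have hwteq : wt n (g n i + ∑ j ∈ J, g n j + ∑ m ∈ preM \ insert i J, g n m)
        = wt n (vf n i J) := by
      rw [wt, wt]
      congr 1
      apply Finset.filter_congr
      intro c hc
      rw [hpoint c (Finset.mem_range.1 hc)]
    rw [hwteq, wt_vf hi J, ← wt_row hi, hwi]
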